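/- Let η ∈ (0,1) and N > 0. The covariance of n and k under the joint photon-number distribution equals (1−η) N (N+1): ∑_{n=0}^∞ ∑_{k=0}^{n} p(n,k) (n − N)(k − (1−η)N) = (1−η) N (N+1), where the series converges; here N is the mean of n and (1−η)N is the mean of k under p. -/

import Mathlib

open Real

/-- The joint photon-number distribution
`p(n,k) = (1/(N+1)) (N/(N+1))^n C(n,k) (1−η)^k η^{n−k}` (it vanishes for `k > n`,
since then `C(n,k) = 0`). -/
noncomputable def jointDist (η N : ℝ) (n k : ℕ) : ℝ :=
  (1 / (N + 1)) * (N / (N + 1)) ^ n * (n.choose k : ℝ) * (1 - η) ^ k * η ^ (n - k)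

/-- First moment of the binomial distribution. -/
lemma binom_mean (x y : ℝ) (n : ℕ) :
    ∑ k ∈ Finset.range (n + 1), (k : ℝ) * (n.choose k : ℝ) * x ^ k * y ^ (n - k)
      = n * x * (x + y) ^ (n - 1) := by
  cases n with
  | zero => simp
  | succ m =>
    rw [Finset.sum_range_succ'] -- peel off k = 0
    simp only [Nat.cast_zero, zero_mul, add_zero]
    have : ∀ j ∈ Finset.range (m + 1),
        ((j : ℝ) + 1) * ((m + 1).choose (j + 1) : ℝ) * x ^ (j + 1) * y ^ (m + 1 - (j + 1))
          = ((m : ℝ) + 1) * x * ((m.choose j : ℝ) * x ^ j * y ^ (m - j)) := by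
      intro j hj
      have h := Nat.add_one_mul_choose_eq m j
      have h' : ((m : ℝ) + 1) * (m.choose j : ℝ)
          = ((m + 1).choose (j + 1) : ℝ) * ((j : ℝ) + 1) := by
        exact_mod_cast congrArg (Nat.cast : ℕ → ℝ) h
      have hsub : m + 1 - (j + 1) = m - j := by omega
      rw [hsub, pow_succ]
      linear_combination (-(x ^ j * x * y ^ (m - j))) * h'
    rw [Finset.sum_congr rfl (fun j hj => by
      simpa using this j hj)]
    rw [← Finset.mul_sum]
    have hb : ∑ j ∈ Finset.range (m + 1), (m.choose j : ℝ) * x ^ j * y ^ (m - j)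
        = (x + y) ^ m := by
      rw [add_pow]
      exact Finset.sum_congr rfl fun j hj => by ring
    rw [hb]
    simp only [Nat.add_sub_cancel]
    push_cast
    ring

theorem joint_covariance (η N : ℝ) (hη : η ∈ Set.Ioo (0 : ℝ) 1) (hN : 0 < N) :
    HasSum
      (fun n : ℕ => ∑ k ∈ Finset.range (n + 1),
        jointDist η N n k * ((n : ℝ) - N) * ((k : ℝ) - (1 - η) * N))
      ((1 - η) * N * (N + 1)) := by
  obtain ⟨hη0, hη1⟩ := hη
  have hN1 : (0:ℝ) < N + 1 := by linarith
  have hN1' : N + 1 ≠ 0 := ne_of_gt hN1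
  set r : ℝ := N / (N + 1) with hr_def
  have hr0 : 0 ≤ r := by positivity
  have hr1 : r < 1 := by
    rw [hr_def, div_lt_one hN1]; linarith
  have hrn : ‖r‖ < 1 := by rwa [Real.norm_eq_abs, abs_of_nonneg hr0]
  have h1r : 1 - r = 1 / (N + 1) := by rw [hr_def]; field_simp; ring
  set a : ℝ := (1 - η) / (N + 1) with ha_def
  -- Step 1: the inner sum equals a * r^n * (n - N)^2
  have hinner : ∀ n : ℕ,
      (∑ k ∈ Finset.range (n + 1),
        jointDist η N n k * ((n : ℝ) - N) * ((k : ℝ) - (1 - η) * N))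
      = a * r ^ n * ((n : ℝ) - N) ^ 2 := by
    intro n
    have expand : ∀ k ∈ Finset.range (n + 1),
        jointDist η N n k * ((n : ℝ) - N) * ((k : ℝ) - (1 - η) * N)
        = (1 / (N + 1)) * r ^ n * ((n : ℝ) - N) *
            ((k : ℝ) * (n.choose k : ℝ) * (1 - η) ^ k * η ^ (n - k))
          - (1 / (N + 1)) * r ^ n * ((n : ℝ) - N) * ((1 - η) * N) *
            ((n.choose k : ℝ) * (1 - η) ^ k * η ^ (n - k)) := by
      intro k hk
      simp only [jointDist]
      ring
    rw [Finset.sum_congr rfl expand, Finset.sum_sub_distrib, ← Finset.mul_sum, ← Finset.mul_sum]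
    have hmean := binom_mean (1 - η) η n
    have hsum1 : ∑ k ∈ Finset.range (n + 1),
        (n.choose k : ℝ) * (1 - η) ^ k * η ^ (n - k) = 1 := by
      have hap := add_pow (1 - η) η n
      rw [show (1 - η) + η = 1 by ring, one_pow] at hap
      calc ∑ k ∈ Finset.range (n + 1), (n.choose k : ℝ) * (1 - η) ^ k * η ^ (n - k)
          = ∑ m ∈ Finset.range (n + 1), (1 - η) ^ m * η ^ (n - m) * (n.choose m : ℝ) :=
            Finset.sum_congr rfl fun k hk => by ring
        _ = 1 := hap.symm
    have hsum2 : ∑ k ∈ Finset.range (n + 1),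
        (k : ℝ) * (n.choose k : ℝ) * (1 - η) ^ k * η ^ (n - k) = n * (1 - η) := by
      rw [hmean, show (1 - η) + η = 1 by ring, one_pow, mul_one]
    rw [hsum1, hsum2, ha_def]
    field_simp
  -- Step 2: sum the series
  have h2 := hasSum_choose_mul_geometric_of_norm_lt_one (𝕜 := ℝ) 2 hrn
  have h1 := hasSum_choose_mul_geometric_of_norm_lt_one (𝕜 := ℝ) 1 hrn
  have h0 := hasSum_choose_mul_geometric_of_norm_lt_one (𝕜 := ℝ) 0 hrn
  rw [h1r] at h2 h1 h0
  have H := ((h2.mul_left (2 * a)).sub (h1.mul_left ((3 + 2 * N) * a))).add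
    (h0.mul_left ((N + 1) ^ 2 * a))
  have Hfun : (fun n : ℕ =>
      (2 * a * (((n + 2).choose 2 : ℝ) * r ^ n)
        - (3 + 2 * N) * a * (((n + 1).choose 1 : ℝ) * r ^ n))
      + (N + 1) ^ 2 * a * (((n + 0).choose 0 : ℝ) * r ^ n))
      = (fun n : ℕ => ∑ k ∈ Finset.range (n + 1),
        jointDist η N n k * ((n : ℝ) - N) * ((k : ℝ) - (1 - η) * N)) := by
    funext n
    rw [hinner n]
    have hc2 : ((n + 2).choose 2 : ℝ) = ((n : ℝ) + 2) * ((n : ℝ) + 1) / 2 := by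
      have h : 2 * (n + 2).choose 2 = (n + 2) * (n + 1) := by
        rw [Nat.choose_two_right, show n + 2 - 1 = n + 1 from rfl]
        exact Nat.mul_div_cancel'
          (by simpa [Nat.mul_comm] using (Nat.even_mul_succ_self (n + 1)).two_dvd)
      have h' : 2 * ((n + 2).choose 2 : ℝ) = ((n : ℝ) + 2) * ((n : ℝ) + 1) := by
        exact_mod_cast congrArg (Nat.cast : ℕ → ℝ) h
      linarith
    have hc1 : ((n + 1).choose 1 : ℝ) = (n : ℝ) + 1 := by
      rw [Nat.choose_one_right]; push_cast; ring
    rw [hc2, hc1, Nat.choose_zero_right]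
    push_cast
    ring
  rw [Hfun] at H
  convert H using 1
  · rfl
  have hval : 2 * a * (1 / (1 / (N + 1)) ^ (2 + 1))
      - (3 + 2 * N) * a * (1 / (1 / (N + 1)) ^ (1 + 1))
      + (N + 1) ^ 2 * a * (1 / (1 / (N + 1)) ^ (0 + 1))
      = (1 - η) * N * (N + 1) := by
    rw [ha_def]
    simp only [one_div, inv_pow, inv_inv]
    field_simp
    ring
  linarith [hval]
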